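/- arXiv:1711.06327 — 4 statements merged into one kernel-verified Lean document; each statement's English description precedes it below -/
import Mathlib

section
/- (ODE for the stationary characteristic function) Let f(x) = ∑_{l=0}^{d_f} a_l x^l and G(x) = ∑_{l=0}^{d_g} b_l x^l be real polynomials (with G playing the role of g²), let ν be a measure on ℝ with ν({0}) = 0 and ∫ y² dν(y) < ∞, and define the characteristic exponent η(ω) = ∫ (e^{iωy} − 1 − iωy) dν(y). Let n = max(d_f, d_g) and let μ be a probability measure on ℝ with ∫ |x|^n dμ(x) < ∞ that satisfies the stationarity condition: for every ω ∈ ℝ, ∫ [ iω f(x) + (1/2)(iω)² G(x) + η(ω) ] e^{iωx} dμ(x) = 0. Then the characteristic function φ(ω) = ∫ e^{iωx} dμ(x) is n times differentiable and satisfies, for every ω ∈ ℝ, the ordinary differential equation iω ∑_{l=0}^{d_f} a_l i^{−l} φ^{(l)}(ω) + (1/2)(iω)² ∑_{l=0}^{d_g} b_l i^{−l} φ^{(l)}(ω) + η(ω) φ(ω) = 0, where φ^{(l)} denotes the l-th iterated derivative of φ. -/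
open MeasureTheory Complex Finset

/-- ODE for the stationary characteristic function. Let
`f x = ∑_{l=0}^{d_f} a l * x^l` and `G x = ∑_{l=0}^{d_g} b l * x^l` (with `G` playing the
role of `g²`), let `ν` be a Lévy measure (`ν {0} = 0`, finite second moment) with
characteristic exponent `η ω = ∫ (e^{iωy} - 1 - iωy) dν(y)`, and let `μ` be a probability
measure with finite `n`-th absolute moment, `n = max d_f d_g`, satisfying the stationarity
condition `∫ (iω f(x) + (1/2)(iω)² G(x) + η(ω)) e^{iωx} dμ(x) = 0` for all `ω`. Then the
characteristic function `φ` is `n` times differentiable and satisfies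
`iω ∑_l a_l i^{-l} φ^{(l)}(ω) + (1/2)(iω)² ∑_l b_l i^{-l} φ^{(l)}(ω) + η(ω) φ(ω) = 0`. -/
theorem stationary_charFun_ode
    (d_f d_g : ℕ) (a b : ℕ → ℝ)
    (ν : Measure ℝ) (hν0 : ν {0} = 0) (hν2 : Integrable (fun y : ℝ => y ^ 2) ν)
    (η : ℝ → ℂ)
    (hη : ∀ ω : ℝ, η ω = ∫ y, (Complex.exp (Complex.I * ω * y) - 1 - Complex.I * ω * y) ∂ν)
    (n : ℕ) (hn : n = max d_f d_g)
    (μ : Measure ℝ) [IsProbabilityMeasure μ]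
    (hmom : Integrable (fun x : ℝ => |x| ^ n) μ)
    (hstat : ∀ ω : ℝ,
      ∫ x, (Complex.I * ω * (∑ l ∈ range (d_f + 1), (a l : ℂ) * (x : ℂ) ^ l)
            + (1 / 2) * (Complex.I * ω) ^ 2 * (∑ l ∈ range (d_g + 1), (b l : ℂ) * (x : ℂ) ^ l)
            + η ω) * Complex.exp (Complex.I * ω * x) ∂μ = 0)
    (φ : ℝ → ℂ) (hφ : ∀ ω : ℝ, φ ω = ∫ x, Complex.exp (Complex.I * ω * x) ∂μ) :
    (∀ k < n, Differentiable ℝ (iteratedDeriv k φ)) ∧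
      ∀ ω : ℝ,
        Complex.I * ω * (∑ l ∈ range (d_f + 1),
            (a l : ℂ) * Complex.I ^ (-(l : ℤ)) * iteratedDeriv l φ ω)
          + (1 / 2) * (Complex.I * ω) ^ 2 * (∑ l ∈ range (d_g + 1),
            (b l : ℂ) * Complex.I ^ (-(l : ℤ)) * iteratedDeriv l φ ω)
          + η ω * φ ω = 0 := by
  -- norm of the complex exponential is 1
  have hnorm : ∀ ω x : ℝ, ‖Complex.exp (Complex.I * ω * x)‖ = 1 := by
    intro ω x
    rw [show Complex.I * (ω : ℂ) * (x : ℂ) = ((ω * x : ℝ) : ℂ) * Complex.I by push_cast; ring,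
      Complex.norm_exp_ofReal_mul_I]
  -- integrability of absolute moments of lower order
  have habs : ∀ l, l ≤ n → Integrable (fun x : ℝ => |x| ^ l) μ := by
    intro l hl
    refine ((integrable_const (1 : ℝ)).add hmom).mono' ?_ ?_
    · exact (_root_.continuous_abs.pow l).aestronglyMeasurable
    · filter_upwards with x
      rw [Real.norm_eq_abs, _root_.abs_of_nonneg (by positivity)]
      rcases le_or_gt (|x|) 1 with h | h
      · have : |x| ^ l ≤ 1 := pow_le_one₀ (abs_nonneg x) h
        have h0 : (0:ℝ) ≤ |x| ^ n := by positivity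
        simp only [Pi.add_apply]; linarith
      · have : |x| ^ l ≤ |x| ^ n := pow_le_pow_right₀ h.le hl
        simp only [Pi.add_apply]; linarith
  -- integrability of the integrands
  have hint : ∀ (l : ℕ), l ≤ n → ∀ ω : ℝ,
      Integrable (fun x : ℝ => (Complex.I * x) ^ l * Complex.exp (Complex.I * ω * x)) μ := by
    intro l hl ω
    refine (habs l hl).mono' ?_ ?_
    · exact (Continuous.mul (by fun_prop) (by fun_prop)).aestronglyMeasurable
    · filter_upwards with x
      rw [norm_mul, hnorm, mul_one, norm_pow, norm_mul, Complex.norm_I,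
        one_mul, Complex.norm_real, Real.norm_eq_abs]
  have hint' : ∀ (l : ℕ), l ≤ n → ∀ ω : ℝ,
      Integrable (fun x : ℝ => (x : ℂ) ^ l * Complex.exp (Complex.I * ω * x)) μ := by
    intro l hl ω
    refine (habs l hl).mono' ?_ ?_
    · exact (Continuous.mul (by fun_prop) (by fun_prop)).aestronglyMeasurable
    · filter_upwards with x
      rw [norm_mul, hnorm, mul_one, norm_pow, Complex.norm_real, Real.norm_eq_abs]
  -- pointwise derivative of the integrand
  have hD : ∀ (l : ℕ) (x ω : ℝ),
      HasDerivAt (fun ω : ℝ => (Complex.I * x) ^ l * Complex.exp (Complex.I * ω * x))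
        ((Complex.I * x) ^ (l + 1) * Complex.exp (Complex.I * ω * x)) ω := by
    intro l x ω
    have h2 : HasDerivAt (fun w : ℂ => Complex.I * w * (x : ℂ)) (Complex.I * x) ω := by
      simpa using ((hasDerivAt_id ((ω : ℝ) : ℂ)).const_mul Complex.I).mul_const (x : ℂ)
    have h3 := (h2.cexp).const_mul ((Complex.I * (x : ℂ)) ^ l)
    have h4 : HasDerivAt (fun w : ℂ => (Complex.I * (x : ℂ)) ^ l * Complex.exp (Complex.I * w * x))
        ((Complex.I * x) ^ (l + 1) * Complex.exp (Complex.I * (ω : ℂ) * x)) ω := by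
      refine h3.congr_deriv ?_
      rw [pow_succ]; ring
    exact h4.comp_ofReal
  -- derivative under the integral sign
  have hderiv : ∀ (l : ℕ), l < n → ∀ ω₀ : ℝ,
      HasDerivAt (fun ω : ℝ => ∫ x, (Complex.I * x) ^ l * Complex.exp (Complex.I * ω * x) ∂μ)
        (∫ x, (Complex.I * x) ^ (l + 1) * Complex.exp (Complex.I * ω₀ * x) ∂μ) ω₀ := by
    intro l hl ω₀
    have key := hasDerivAt_integral_of_dominated_loc_of_deriv_le (μ := μ)
      (F := fun (ω : ℝ) (x : ℝ) => (Complex.I * x) ^ l * Complex.exp (Complex.I * ω * x))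
      (F' := fun (ω : ℝ) (x : ℝ) => (Complex.I * x) ^ (l + 1) * Complex.exp (Complex.I * ω * x))
      (x₀ := ω₀) (bound := fun x : ℝ => |x| ^ (l + 1)) Filter.univ_mem
      (Filter.Eventually.of_forall fun ω => (hint l hl.le ω).aestronglyMeasurable)
      (hint l hl.le ω₀) (hint (l + 1) hl ω₀).aestronglyMeasurable ?_
      (habs (l + 1) hl) ?_
    · exact key.2
    · filter_upwards with x
      intro ω _
      rw [norm_mul, hnorm, mul_one, norm_pow, norm_mul, Complex.norm_I,
        one_mul, Complex.norm_real, Real.norm_eq_abs]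
    · filter_upwards with x
      intro ω _
      exact hD l x ω
  -- identification of the iterated derivatives
  have hiter : ∀ l, l ≤ n → iteratedDeriv l φ
      = fun ω : ℝ => ∫ x, (Complex.I * x) ^ l * Complex.exp (Complex.I * ω * x) ∂μ := by
    intro l
    induction l with
    | zero =>
      intro _
      funext ω
      simp only [iteratedDeriv_zero, hφ ω, pow_zero, one_mul]
    | succ k ih =>
      intro hk
      funext ω
      rw [iteratedDeriv_succ, ih (Nat.le_of_succ_le hk)]
      exact (hderiv k (Nat.lt_of_succ_le hk) ω).deriv
  refine ⟨?_, ?_⟩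
  · intro k hk
    rw [hiter k hk.le]
    exact fun ω => (hderiv k hk ω).differentiableAt
  -- the ODE
  intro ω
  have hIl : ∀ l : ℕ, (Complex.I : ℂ) ^ (-(l : ℤ)) * Complex.I ^ l = 1 := by
    intro l
    rw [zpow_neg, zpow_natCast]
    exact inv_mul_cancel₀ (pow_ne_zero _ Complex.I_ne_zero)
  -- each iterated derivative times I^{-l} is the l-th moment-type integral
  have hmomint : ∀ l, l ≤ n →
      Complex.I ^ (-(l : ℤ)) * iteratedDeriv l φ ω
        = ∫ x, (x : ℂ) ^ l * Complex.exp (Complex.I * ω * x) ∂μ := by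
    intro l hl
    rw [hiter l hl]
    have : ∀ x : ℝ, (Complex.I * (x : ℂ)) ^ l * Complex.exp (Complex.I * ω * x)
        = Complex.I ^ l * ((x : ℂ) ^ l * Complex.exp (Complex.I * ω * x)) := by
      intro x; rw [mul_pow]; ring
    simp only [this]
    rw [integral_const_mul, ← mul_assoc, hIl l, one_mul]
  have hdf : d_f ≤ n := hn ▸ le_max_left _ _
  have hdg : d_g ≤ n := hn ▸ le_max_right _ _
  have hsum : ∀ (d : ℕ) (c : ℕ → ℝ), d ≤ n →
      (∑ l ∈ range (d + 1), (c l : ℂ) * Complex.I ^ (-(l : ℤ)) * iteratedDeriv l φ ω)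
        = ∫ x, (∑ l ∈ range (d + 1), (c l : ℂ) * (x : ℂ) ^ l)
            * Complex.exp (Complex.I * ω * x) ∂μ := by
    intro d c hd
    have h1 : ∀ l ∈ range (d + 1),
        Integrable (fun x : ℝ => (c l : ℂ) * ((x : ℂ) ^ l * Complex.exp (Complex.I * ω * x))) μ :=
      fun l hl => (hint' l (le_trans (Nat.lt_succ_iff.mp (mem_range.mp hl)) hd) ω).const_mul _
    calc (∑ l ∈ range (d + 1), (c l : ℂ) * Complex.I ^ (-(l : ℤ)) * iteratedDeriv l φ ω)
        = ∑ l ∈ range (d + 1),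
            ∫ x, (c l : ℂ) * ((x : ℂ) ^ l * Complex.exp (Complex.I * ω * x)) ∂μ := by
          refine Finset.sum_congr rfl fun l hl => ?_
          rw [mul_assoc, hmomint l (le_trans (Nat.lt_succ_iff.mp (mem_range.mp hl)) hd),
            ← integral_const_mul]
      _ = ∫ x, ∑ l ∈ range (d + 1),
            (c l : ℂ) * ((x : ℂ) ^ l * Complex.exp (Complex.I * ω * x)) ∂μ :=
          (integral_finset_sum _ h1).symm
      _ = ∫ x, (∑ l ∈ range (d + 1), (c l : ℂ) * (x : ℂ) ^ l)
            * Complex.exp (Complex.I * ω * x) ∂μ := by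
          congr 1; funext x; rw [Finset.sum_mul]; exact Finset.sum_congr rfl fun l _ => by ring
  have hSf : Integrable (fun x : ℝ => (∑ l ∈ range (d_f + 1), (a l : ℂ) * (x : ℂ) ^ l)
      * Complex.exp (Complex.I * ω * x)) μ := by
    have : ∀ x : ℝ, (∑ l ∈ range (d_f + 1), (a l : ℂ) * (x : ℂ) ^ l)
        * Complex.exp (Complex.I * ω * x)
        = ∑ l ∈ range (d_f + 1), (a l : ℂ) * ((x : ℂ) ^ l * Complex.exp (Complex.I * ω * x)) := by
      intro x; rw [Finset.sum_mul]; exact Finset.sum_congr rfl fun l _ => by ring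
    simp only [this]
    exact integrable_finset_sum _ fun l hl =>
      (hint' l (le_trans (Nat.lt_succ_iff.mp (mem_range.mp hl)) hdf) ω).const_mul _
  have hSg : Integrable (fun x : ℝ => (∑ l ∈ range (d_g + 1), (b l : ℂ) * (x : ℂ) ^ l)
      * Complex.exp (Complex.I * ω * x)) μ := by
    have : ∀ x : ℝ, (∑ l ∈ range (d_g + 1), (b l : ℂ) * (x : ℂ) ^ l)
        * Complex.exp (Complex.I * ω * x)
        = ∑ l ∈ range (d_g + 1), (b l : ℂ) * ((x : ℂ) ^ l * Complex.exp (Complex.I * ω * x)) := by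
      intro x; rw [Finset.sum_mul]; exact Finset.sum_congr rfl fun l _ => by ring
    simp only [this]
    exact integrable_finset_sum _ fun l hl =>
      (hint' l (le_trans (Nat.lt_succ_iff.mp (mem_range.mp hl)) hdg) ω).const_mul _
  have hE : Integrable (fun x : ℝ => Complex.exp (Complex.I * ω * x)) μ := by
    simpa using hint' 0 (Nat.zero_le n) ω
  -- put everything together
  have h0 := hstat ω
  have heq : (fun x : ℝ => (Complex.I * ω * (∑ l ∈ range (d_f + 1), (a l : ℂ) * (x : ℂ) ^ l)
        + (1 / 2) * (Complex.I * ω) ^ 2 * (∑ l ∈ range (d_g + 1), (b l : ℂ) * (x : ℂ) ^ l)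
        + η ω) * Complex.exp (Complex.I * ω * x))
      = fun x : ℝ =>
        (Complex.I * ω * ((∑ l ∈ range (d_f + 1), (a l : ℂ) * (x : ℂ) ^ l)
            * Complex.exp (Complex.I * ω * x))
          + (1 / 2) * (Complex.I * ω) ^ 2 * ((∑ l ∈ range (d_g + 1), (b l : ℂ) * (x : ℂ) ^ l)
            * Complex.exp (Complex.I * ω * x)))
          + η ω * Complex.exp (Complex.I * ω * x) := funext fun x => by ring
  rw [heq] at h0
  have hA : Integrable (fun x : ℝ => Complex.I * ω * ((∑ l ∈ range (d_f + 1),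
      (a l : ℂ) * (x : ℂ) ^ l) * Complex.exp (Complex.I * ω * x))) μ := hSf.const_mul _
  have hB : Integrable (fun x : ℝ => (1 / 2) * (Complex.I * ω) ^ 2 * ((∑ l ∈ range (d_g + 1),
      (b l : ℂ) * (x : ℂ) ^ l) * Complex.exp (Complex.I * ω * x))) μ := hSg.const_mul _
  have hC : Integrable (fun x : ℝ => η ω * Complex.exp (Complex.I * ω * x)) μ := hE.const_mul _
  have hAB : Integrable (fun x : ℝ => Complex.I * ω * ((∑ l ∈ range (d_f + 1),
      (a l : ℂ) * (x : ℂ) ^ l) * Complex.exp (Complex.I * ω * x))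
      + (1 / 2) * (Complex.I * ω) ^ 2 * ((∑ l ∈ range (d_g + 1),
      (b l : ℂ) * (x : ℂ) ^ l) * Complex.exp (Complex.I * ω * x))) μ := hA.add hB
  rw [integral_add hAB hC, integral_add hA hB, integral_const_mul, integral_const_mul,
    integral_const_mul] at h0
  rw [hsum d_f a hdf, hsum d_g b hdg, hφ ω]
  exact h0
end

section
/- Let a > 0 and b > 0 be real numbers. Then for every ω ∈ ℝ, the integral over (0, ∞) of (e^{iωy} − 1) · a y^{−1} e^{−by} with respect to Lebesgue measure converges and equals −a · Log(1 − iω/b), where Log denotes the principal branch of the complex logarithm. -/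
open MeasureTheory Complex

lemma integrableOn_cexp_Ioi' {c : ℂ} (hc : c.re < 0) :
    IntegrableOn (fun y : ℝ => Complex.exp (c * y)) (Set.Ioi 0) := by
  have h : IntegrableOn (fun y : ℝ => Real.exp (-(-c.re) * y)) (Set.Ioi 0) :=
    exp_neg_integrableOn_Ioi 0 (by linarith)
  refine h.integrable.mono' ?_ ?_
  · exact (Complex.continuous_exp.comp (by continuity)).aestronglyMeasurable
  · filter_upwards with y
    simp [Complex.norm_exp, Complex.mul_re]

lemma integral_cexp_Ioi' {c : ℂ} (hc : c.re < 0) :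
    ∫ y in Set.Ioi (0:ℝ), Complex.exp (c * y) = -c⁻¹ := by
  have hc0 : c ≠ 0 := by intro h; simp [h] at hc
  have hderiv : ∀ x ∈ Set.Ici (0:ℝ),
      HasDerivAt (fun y : ℝ => Complex.exp (c * y) / c) (Complex.exp (c * x)) x := by
    intro x _
    have h1 : HasDerivAt (fun y : ℝ => c * (y : ℂ)) c x := by
      simpa using (Complex.ofRealCLM.hasDerivAt (x := x)).const_mul c
    have h2 : HasDerivAt (fun y : ℝ => Complex.exp (c * y)) (Complex.exp (c * x) * c) x :=
      h1.cexp
    simpa [mul_div_assoc, mul_div_cancel_right₀ _ hc0] using h2.div_const c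
  have htend : Filter.Tendsto (fun y : ℝ => Complex.exp (c * y) / c)
      Filter.atTop (nhds 0) := by
    rw [tendsto_zero_iff_norm_tendsto_zero]
    have hre : Filter.Tendsto (fun y : ℝ => Real.exp (c.re * y)) Filter.atTop (nhds 0) := by
      apply Real.tendsto_exp_atBot.comp
      exact Filter.Tendsto.const_mul_atTop_of_neg hc Filter.tendsto_id
    have heq : (fun y : ℝ => ‖Complex.exp (c * y) / c‖)
        = fun y : ℝ => Real.exp (c.re * y) / ‖c‖ := by
      funext y
      simp [Complex.norm_exp, Complex.mul_re]
    rw [heq]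
    simpa using hre.div_const ‖c‖
  have := integral_Ioi_of_hasDerivAt_of_tendsto' hderiv (integrableOn_cexp_Ioi' hc) htend
  rw [this]
  simp [one_div]

lemma abs_cexp_I_mul_sub_one_le (s : ℝ) :
    ‖Complex.exp (Complex.I * s) - 1‖ ≤ 2 * |s| := by
  rcases le_or_gt (|s|) 1 with h | h
  · have := Complex.norm_exp_sub_one_le (x := Complex.I * s) (by simpa using h)
    simpa using this
  · have h1 : ‖Complex.exp (Complex.I * s) - 1‖
        ≤ ‖Complex.exp (Complex.I * s)‖ + 1 := by
      simpa using norm_sub_le (Complex.exp (Complex.I * s)) 1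
    have h2 : ‖Complex.exp (Complex.I * s)‖ = 1 := by
      simp [Complex.norm_exp]
    nlinarith [abs_nonneg s]

lemma integrableOn_f (b : ℝ) (hb : 0 < b) (t : ℝ) :
    IntegrableOn (fun y : ℝ => (Complex.exp (Complex.I * t * y) - 1) *
      ((y : ℂ)⁻¹ * Real.exp (-(b * y)))) (Set.Ioi 0) := by
  have hg : IntegrableOn (fun y : ℝ => 2 * |t| * Real.exp (-b * y)) (Set.Ioi 0) :=
    (exp_neg_integrableOn_Ioi 0 hb).const_mul _
  refine hg.integrable.mono' ?_ ?_
  · apply ContinuousOn.aestronglyMeasurable _ measurableSet_Ioi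
    apply ContinuousOn.mul
    · exact (Continuous.continuousOn (by continuity)).sub continuousOn_const
    · apply ContinuousOn.mul
      · exact (Complex.continuous_ofReal.continuousOn).inv₀
          fun y hy => by exact_mod_cast (ne_of_gt (Set.mem_Ioi.mp hy))
      · exact Continuous.continuousOn (by continuity)
  · rw [ae_restrict_iff' measurableSet_Ioi]
    filter_upwards with y hy
    have hy0 : 0 < y := hy
    have h1 : ‖Complex.exp (Complex.I * t * y) - 1‖ ≤ 2 * |t| * y := by
      have := abs_cexp_I_mul_sub_one_le (t * y)
      have heq : Complex.I * (t : ℂ) * (y : ℂ) = Complex.I * ((t * y : ℝ) : ℂ) := by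
        push_cast; ring
      rw [heq]
      calc ‖Complex.exp (Complex.I * ((t * y : ℝ) : ℂ)) - 1‖ ≤ 2 * |t * y| := this
        _ = 2 * |t| * y := by rw [abs_mul, abs_of_pos hy0]; ring
    have h2 : ‖((y : ℂ)⁻¹ * (Real.exp (-(b * y)) : ℂ))‖ = y⁻¹ * Real.exp (-(b * y)) := by
      simp [abs_of_pos hy0, Complex.norm_exp, Complex.mul_re, abs_of_pos (Real.exp_pos _)]
    calc ‖(Complex.exp (Complex.I * t * y) - 1) * ((y : ℂ)⁻¹ * Real.exp (-(b * y)))‖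
        = ‖Complex.exp (Complex.I * t * y) - 1‖ * (y⁻¹ * Real.exp (-(b * y))) := by
          rw [norm_mul, h2]
      _ ≤ (2 * |t| * y) * (y⁻¹ * Real.exp (-(b * y))) := by
          apply mul_le_mul_of_nonneg_right h1
          positivity
      _ = 2 * |t| * Real.exp (-b * y) := by
          rw [neg_mul]
          field_simp


lemma hasDerivAt_F (b : ℝ) (hb : 0 < b) (t₀ : ℝ) :
    HasDerivAt (fun t : ℝ => ∫ y in Set.Ioi (0:ℝ),
      (Complex.exp (Complex.I * t * y) - 1) * ((y : ℂ)⁻¹ * Real.exp (-(b * y))))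
      (Complex.I / (b - Complex.I * t₀)) t₀ := by
  have key := hasDerivAt_integral_of_dominated_loc_of_deriv_le
    (μ := volume.restrict (Set.Ioi 0))
    (F := fun (t : ℝ) (y : ℝ) =>
      (Complex.exp (Complex.I * t * y) - 1) * ((y : ℂ)⁻¹ * Real.exp (-(b * y))))
    (F' := fun (t : ℝ) (y : ℝ) => Complex.I * Complex.exp ((Complex.I * t - b) * y))
    (x₀ := t₀) (bound := fun y => Real.exp (-b * y)) (s := Metric.ball t₀ 1) (Metric.ball_mem_nhds t₀ one_pos)
    ?_ ?_ ?_ ?_ ?_ ?_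
  · obtain ⟨-, hd⟩ := key
    have hre : (Complex.I * (t₀ : ℂ) - (b : ℂ)).re < 0 := by
      simp [Complex.sub_re, Complex.mul_re]
      linarith
    have hint : (∫ y in Set.Ioi (0:ℝ), Complex.I * Complex.exp ((Complex.I * t₀ - b) * y))
        = Complex.I / ((b : ℂ) - Complex.I * t₀) := by
      rw [MeasureTheory.integral_const_mul, integral_cexp_Ioi' hre]
      rw [div_eq_mul_inv, ← neg_sub (Complex.I * (t₀:ℂ)) (b:ℂ), inv_neg]
    rw [hint] at hd
    exact hd
  · exact Filter.Eventually.of_forall fun t => (integrableOn_f b hb t).aestronglyMeasurable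
  · exact integrableOn_f b hb t₀
  · exact (Continuous.aestronglyMeasurable (by continuity)).restrict
  · refine Filter.Eventually.of_forall fun y => fun t _ => ?_
    have h1 : ‖Complex.I * Complex.exp ((Complex.I * t - b) * y)‖ = Real.exp (-b * y) := by
      simp [Complex.norm_exp, Complex.mul_re, Complex.sub_re]
    rw [h1]
  · exact exp_neg_integrableOn_Ioi 0 hb
  · rw [ae_restrict_iff' measurableSet_Ioi]
    filter_upwards with y hy
    intro t _
    have hy0 : (y : ℂ) ≠ 0 := by exact_mod_cast (ne_of_gt (Set.mem_Ioi.mp hy))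
    have h0 : HasDerivAt (fun t : ℝ => ((t : ℂ))) 1 t := Complex.ofRealCLM.hasDerivAt
    have h1' := h0.const_mul (Complex.I * (y : ℂ))
    rw [mul_one] at h1'
    have h1 : HasDerivAt (fun t : ℝ => Complex.I * (t : ℂ) * (y : ℂ)) (Complex.I * y) t :=
      h1'.congr_of_eventuallyEq (Filter.Eventually.of_forall fun s => by ring)
    have h2 := h1.cexp
    have h3 := (h2.sub_const 1).mul_const ((y : ℂ)⁻¹ * (Real.exp (-(b * y)) : ℂ))
    have hval : Complex.exp (Complex.I * t * y) * (Complex.I * y) *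
          ((y : ℂ)⁻¹ * (Real.exp (-(b * y)) : ℂ))
        = Complex.I * Complex.exp ((Complex.I * t - b) * y) := by
      rw [Complex.ofReal_exp]
      have hexp : (Complex.I * t - b) * y = Complex.I * t * y + ((-(b * y) : ℝ) : ℂ) := by
        push_cast; ring
      rw [hexp, Complex.exp_add]
      field_simp
    rw [← hval]
    exact h3

lemma hasDerivAt_G (b : ℝ) (hb : 0 < b) (t : ℝ) :
    HasDerivAt (fun t : ℝ => -Complex.log (1 - Complex.I * t / b))
      (Complex.I / (b - Complex.I * t)) t := by
  have hb0 : (b : ℂ) ≠ 0 := by exact_mod_cast hb.ne'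
  have hbt : (b : ℂ) - Complex.I * t ≠ 0 := by
    intro h
    have := congrArg Complex.re h
    simp [Complex.sub_re, Complex.mul_re] at this
    linarith
  have hzre : ((1 : ℂ) - Complex.I * t / b).re = 1 := by
    have h1 : (1 : ℂ) - Complex.I * (t : ℂ) / (b : ℂ) = 1 - ((t / b : ℝ) : ℂ) * Complex.I := by
      push_cast; ring
    rw [h1]; simp
  have hz : (1 : ℂ) - Complex.I * t / b ∈ Complex.slitPlane := by
    rw [Complex.mem_slitPlane_iff]
    left
    rw [hzre]; norm_num
  have hz0 : (1 : ℂ) - Complex.I * t / b ≠ 0 := by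
    intro h
    have := congrArg Complex.re h
    rw [hzre] at this
    simp at this
  have hu : HasDerivAt (fun z : ℂ => 1 - Complex.I * z / b) (-(Complex.I / b)) ((t : ℝ) : ℂ) := by
    have := (((hasDerivAt_id ((t : ℝ) : ℂ)).const_mul Complex.I).div_const b).const_sub 1
    simpa using this
  have hlog := (Complex.hasDerivAt_log hz).comp ((t : ℝ) : ℂ) hu
  have hfin := (hlog.comp_ofReal).neg
  exact hfin.congr_deriv (by field_simp)

/-- For `a, b > 0` and any `ω : ℝ`, the integral over `(0, ∞)` of
`(e^{iωy} - 1) · a y⁻¹ e^{-by}` converges and equals `-a Log(1 - iω/b)`, where `Log` is the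
principal branch of the complex logarithm. -/
theorem gamma_process_char_exponent (a b : ℝ) (ha : 0 < a) (hb : 0 < b) (ω : ℝ) :
    IntegrableOn
      (fun y : ℝ => (Complex.exp (Complex.I * ω * y) - 1) * ((a : ℂ) * (y : ℂ)⁻¹ * Real.exp (-(b * y))))
      (Set.Ioi 0) volume ∧
    ∫ y in Set.Ioi (0 : ℝ),
        (Complex.exp (Complex.I * ω * y) - 1) * ((a : ℂ) * (y : ℂ)⁻¹ * Real.exp (-(b * y)))
      = -(a : ℂ) * Complex.log (1 - Complex.I * ω / b) := by
  have heq : (fun y : ℝ => (Complex.exp (Complex.I * ω * y) - 1) *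
        ((a : ℂ) * (y : ℂ)⁻¹ * Real.exp (-(b * y))))
      = fun y : ℝ => (a : ℂ) * ((Complex.exp (Complex.I * ω * y) - 1) *
        ((y : ℂ)⁻¹ * Real.exp (-(b * y)))) := by
    funext y; ring
  have hFG : ∀ t : ℝ, (∫ y in Set.Ioi (0:ℝ),
        (Complex.exp (Complex.I * t * y) - 1) * ((y : ℂ)⁻¹ * Real.exp (-(b * y))))
      = -Complex.log (1 - Complex.I * t / b) := by
    have hder : ∀ t : ℝ, HasDerivAt (fun t : ℝ => (∫ y in Set.Ioi (0:ℝ),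
          (Complex.exp (Complex.I * t * y) - 1) * ((y : ℂ)⁻¹ * Real.exp (-(b * y))))
        - (-Complex.log (1 - Complex.I * t / b))) 0 t := by
      intro t
      simpa [Pi.sub_def] using (hasDerivAt_F b hb t).sub (hasDerivAt_G b hb t)
    intro t
    have hconst := is_const_of_deriv_eq_zero (f := fun t : ℝ => (∫ y in Set.Ioi (0:ℝ),
          (Complex.exp (Complex.I * t * y) - 1) * ((y : ℂ)⁻¹ * Real.exp (-(b * y))))
        - (-Complex.log (1 - Complex.I * t / b)))
      (fun x => (hder x).differentiableAt) (fun x => (hder x).deriv) t 0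
    have h0 : (∫ y in Set.Ioi (0:ℝ),
        (Complex.exp (Complex.I * (0:ℝ) * y) - 1) * ((y : ℂ)⁻¹ * Real.exp (-(b * y)))) = 0 := by
      simp
    rw [h0] at hconst
    simp only [Complex.ofReal_zero, mul_zero, zero_div, sub_zero, Complex.log_one,
      neg_zero, zero_sub, sub_neg_eq_add] at hconst
    linear_combination hconst
  constructor
  · rw [heq]
    exact (integrableOn_f b hb ω).const_mul _
  · rw [heq, MeasureTheory.integral_const_mul, hFG ω]
    ring
end

section
/- Let r > 0 and b > 0 be real numbers, and let μ be the Gamma distribution with shape r and rate b. Then the characteristic function of μ satisfies, for every ω ∈ ℝ, ∫ e^{iωx} dμ(x) = exp(−r · Log(1 − iω/b)), where Log denotes the principal branch of the complex logarithm; equivalently, the value of the gamma process τ(t) with Lévy measure a y^{−1} e^{−by} dy at time t (which is Gamma distributed with shape ta and rate b) satisfies E[e^{iωτ(t)}] = e^{−t a Log(1 − iω/b)}. -/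
open MeasureTheory Complex ProbabilityTheory Set Filter

private lemma contOn_aux (c : ℂ) (s : ℂ) :
    ContinuousOn (fun x : ℝ => (x : ℂ) ^ c * Complex.exp (-(s * x))) (Ioi 0) := by
  intro x hx
  have hx0 : (0:ℝ) < x := hx
  refine ContinuousWithinAt.mul ?_ ?_
  · exact ((continuousAt_cpow_const (by exact Or.inl (by simpa using hx0))).comp
      Complex.continuous_ofReal.continuousAt).continuousWithinAt
  · exact (Complex.continuous_exp.comp
      (((continuous_const.mul Complex.continuous_ofReal)).neg)).continuousWithinAt

private lemma hasDerivAt_laplace {r : ℝ} (hr : 0 < r) {s₀ : ℂ} (hs₀ : 0 < s₀.re) :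
    HasDerivAt (fun s : ℂ => ∫ x : ℝ in Ioi 0, (x : ℂ) ^ ((r : ℂ) - 1) * Complex.exp (-(s * x)))
      (∫ x : ℝ in Ioi 0, (x : ℂ) ^ ((r : ℂ) - 1) * (Complex.exp (-(s₀ * x)) * (-(x:ℂ)))) s₀ := by
  set σ := s₀.re with hσ
  have hε : (0:ℝ) < σ / 2 := by positivity
  have key := hasDerivAt_integral_of_dominated_loc_of_deriv_le (μ := volume.restrict (Ioi 0))
    (F := fun s (x : ℝ) => (x : ℂ) ^ ((r : ℂ) - 1) * Complex.exp (-(s * x)))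
    (F' := fun s (x : ℝ) => (x : ℂ) ^ ((r : ℂ) - 1) * (Complex.exp (-(s * x)) * (-(x:ℂ))))
    (x₀ := s₀) (bound := fun x : ℝ => x ^ r * Real.exp (-(σ / 2) * x)) (Metric.ball_mem_nhds s₀ hε)
    ?meas ?int ?meas' ?bound ?bint ?deriv
  · exact key.2
  case meas =>
    exact Eventually.of_forall fun s =>
      ((contOn_aux ((r:ℂ)-1) s).aestronglyMeasurable measurableSet_Ioi)
  case int =>
    have hint : IntegrableOn (fun x : ℝ => x ^ (r - 1) * Real.exp (-σ * x)) (Ioi 0) := by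
      have := integrableOn_rpow_mul_exp_neg_mul_rpow (by linarith : (-1:ℝ) < r - 1)
        zero_lt_one (by positivity : (0:ℝ) < σ)
      simpa using this
    refine hint.mono' ((contOn_aux ((r:ℂ)-1) s₀).aestronglyMeasurable measurableSet_Ioi) ?_
    filter_upwards [ae_restrict_mem measurableSet_Ioi] with x hx
    have hx0 : (0:ℝ) < x := hx
    have hnorm : ‖(x : ℂ) ^ ((r : ℂ) - 1) * Complex.exp (-(s₀ * x))‖
        = x ^ (r - 1) * Real.exp (-(σ * x)) := by
      rw [norm_mul,
        Complex.norm_cpow_eq_rpow_re_of_pos hx0, Complex.norm_exp]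
      simp [Complex.sub_re, Complex.mul_re, hσ]
    rw [hnorm, neg_mul]
  case meas' =>
    have hc := (contOn_aux ((r:ℂ)-1) s₀).mul ((Complex.continuous_ofReal.neg).continuousOn)
    exact (hc.congr (fun x _ => by simp only [Pi.mul_apply, Pi.neg_apply]; ring)).aestronglyMeasurable measurableSet_Ioi
  case bound =>
    filter_upwards [ae_restrict_mem measurableSet_Ioi] with x hx s hs
    have hx0 : (0:ℝ) < x := hx
    have hsre : σ / 2 ≤ s.re := by
      have h1 : |s.re - σ| ≤ ‖s - s₀‖ := by
        simpa using Complex.abs_re_le_norm (s - s₀)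
      have h2 : ‖s - s₀‖ < σ / 2 := by
        simpa [Complex.dist_eq] using Metric.mem_ball.mp hs
      have := abs_sub_lt_iff.mp (lt_of_le_of_lt h1 h2)
      linarith [this.2]
    have hnorm : ‖(x : ℂ) ^ ((r : ℂ) - 1) * (Complex.exp (-(s * x)) * (-(x:ℂ)))‖
        = x ^ (r - 1) * (Real.exp (-(s.re * x)) * x) := by
      rw [norm_mul, norm_mul,
        Complex.norm_cpow_eq_rpow_re_of_pos hx0, Complex.norm_exp]
      simp [Complex.sub_re, Complex.mul_re, abs_of_pos hx0]
    rw [hnorm]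
    have hxr : x ^ (r - 1) * x = x ^ r := by
      rw [← Real.rpow_add_one hx0.ne' (r-1)]; ring_nf
    have step1 : x ^ (r - 1) * (Real.exp (-(s.re * x)) * x)
        = x ^ r * Real.exp (-(s.re * x)) := by rw [← hxr]; ring
    rw [step1]
    refine mul_le_mul_of_nonneg_left ?_ (Real.rpow_nonneg hx0.le r)
    rw [Real.exp_le_exp]
    nlinarith [mul_le_mul_of_nonneg_right hsre hx0.le]
  case bint =>
    have := integrableOn_rpow_mul_exp_neg_mul_rpow (by linarith : (-1:ℝ) < r)
      zero_lt_one hε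
    simpa [IntegrableOn] using this
  case deriv =>
    filter_upwards [ae_restrict_mem measurableSet_Ioi] with x hx s hs
    have h1 : HasDerivAt (fun s : ℂ => -(s * (x:ℂ))) (-(x:ℂ)) s := by
      exact (hasDerivAt_mul_const (x:ℂ)).neg
    exact (h1.cexp).const_mul _

private lemma laplace_cpow {r : ℝ} (hr : 0 < r) {s : ℂ} (hs : 0 < s.re) :
    ∫ x : ℝ in Ioi 0, (x : ℂ) ^ ((r : ℂ) - 1) * Complex.exp (-(s * x))
      = Complex.Gamma r * s ^ (-(r : ℂ)) := by
  set F : ℂ → ℂ := fun s => ∫ x : ℝ in Ioi 0, (x : ℂ) ^ ((r : ℂ) - 1) * Complex.exp (-(s * x))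
    with hF_def
  set G : ℂ → ℂ := fun s => Complex.Gamma r * s ^ (-(r : ℂ)) with hG_def
  set U : Set ℂ := {z : ℂ | 0 < z.re} with hU_def
  have hUopen : IsOpen U := isOpen_lt continuous_const Complex.continuous_re
  have hUconv : Convex ℝ U := convex_halfSpace_re_gt 0
  have hF : AnalyticOnNhd ℂ F U := by
    refine DifferentiableOn.analyticOnNhd (fun z hz => ?_) hUopen
    exact (hasDerivAt_laplace hr hz).differentiableAt.differentiableWithinAt
  have hG : AnalyticOnNhd ℂ G U := by
    refine DifferentiableOn.analyticOnNhd (fun z hz => ?_) hUopen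
    exact ((differentiableAt_id.cpow (differentiableAt_const _)
      (Or.inl hz)).const_mul _).differentiableWithinAt
  have hreal : ∀ c : ℝ, 0 < c → F (c : ℂ) = G (c : ℂ) := by
    intro c hc
    have h := Complex.integral_cpow_mul_exp_neg_mul_Ioi
      (a := (r:ℂ)) (by simpa using hr) hc
    simp only [hF_def, hG_def]
    rw [h, one_div, Complex.inv_cpow _ _ (by
      rw [Complex.arg_ofReal_of_nonneg hc.le]; exact Real.pi_ne_zero.symm),
      ← Complex.cpow_neg, mul_comm]
  have hfreq : ∃ᶠ z in nhdsWithin (1:ℂ) {(1:ℂ)}ᶜ, F z = G z := by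
    have htend : Tendsto (fun n : ℕ => ((1 + ((n:ℝ)+1)⁻¹ : ℝ) : ℂ)) atTop
        (nhdsWithin (1:ℂ) {(1:ℂ)}ᶜ) := by
      refine tendsto_nhdsWithin_of_tendsto_nhds_of_eventually_within _ ?_ ?_
      · have h0 : Tendsto (fun n : ℕ => (1 + ((n:ℝ)+1)⁻¹ : ℝ)) atTop (nhds 1) := by
          have := tendsto_one_div_add_atTop_nhds_zero_nat (𝕜 := ℝ)
          simpa [one_div] using (tendsto_const_nhds.add this).congr (fun n => by ring_nf)
        have := (Complex.continuous_ofReal.tendsto 1).comp h0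
        simpa [Function.comp_def] using this
      · refine Eventually.of_forall fun n => ?_
        simp only [mem_compl_iff, mem_singleton_iff]
        intro h
        have h' : (1 + ((n:ℝ)+1)⁻¹ : ℝ) = 1 := by exact_mod_cast h
        have hn : (0:ℝ) < ((n:ℝ)+1)⁻¹ := by positivity
        linarith
    exact htend.frequently (Eventually.of_forall fun n =>
      hreal _ (by positivity)).frequently
  exact hF.eqOn_of_preconnected_of_frequently_eq hG hUconv.isPreconnected
    (by simp [hU_def] : (1:ℂ) ∈ U) hfreq hs

/-- The characteristic function of the Gamma distribution with shape `r > 0`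
and rate `b > 0` is `ω ↦ exp(-r Log(1 - iω/b))`, where `Log` is the principal branch of the
complex logarithm. (For the gamma process, whose value at time `t` is Gamma distributed with
shape `ta` and rate `b`, this gives `E[e^{iωτ(t)}] = e^{-ta Log(1 - iω/b)}`.) -/
theorem charFun_gammaMeasure (r b : ℝ) (hr : 0 < r) (hb : 0 < b) (ω : ℝ) :
    ∫ x, Complex.exp (Complex.I * ω * x) ∂(gammaMeasure r b)
      = Complex.exp (-(r : ℂ) * Complex.log (1 - Complex.I * ω / b)) := by
  set s : ℂ := (b : ℂ) - Complex.I * ω with hs_def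
  have hs_re : 0 < s.re := by
    simp only [hs_def, Complex.sub_re, Complex.mul_re, Complex.I_re, Complex.ofReal_re,
      Complex.I_im, Complex.ofReal_im, zero_mul, one_mul, mul_zero]
    simpa using hb
  have hs_ne : s ≠ 0 := by
    intro h
    rw [h] at hs_re
    simp at hs_re
  have hμ : gammaMeasure r b
      = volume.withDensity fun x => ((gammaPDFReal r b x).toNNReal : ENNReal) := rfl
  rw [hμ, integral_withDensity_eq_integral_smul
    ((measurable_gammaPDFReal r b).real_toNNReal) _]
  have hsmul : ∀ x : ℝ, (gammaPDFReal r b x).toNNReal • Complex.exp (Complex.I * ω * x)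
      = (gammaPDFReal r b x : ℂ) * Complex.exp (Complex.I * ω * x) := by
    intro x
    rw [NNReal.smul_def, Real.coe_toNNReal _ (gammaPDFReal_nonneg hr hb x), real_smul]
  simp_rw [hsmul]
  rw [← setIntegral_eq_integral_of_ae_compl_eq_zero (s := Ioi 0) ?_]
  swap
  · have hae : ∀ᵐ x : ℝ, x ≠ (0:ℝ) := by
      rw [ae_iff]
      simp [Real.volume_singleton]
    filter_upwards [hae] with x hx hxnot
    have hx0 : x < 0 := lt_of_le_of_ne (not_lt.mp hxnot) hx
    have hz : gammaPDFReal r b x = 0 := by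
      unfold ProbabilityTheory.gammaPDFReal
      rw [if_neg (not_le.mpr hx0)]
    rw [hz]; simp
  have hcongr : ∀ x ∈ Ioi (0:ℝ),
      (gammaPDFReal r b x : ℂ) * Complex.exp (Complex.I * ω * x)
        = ((b ^ r / Real.Gamma r : ℝ) : ℂ) * ((x : ℂ) ^ ((r:ℂ) - 1) * Complex.exp (-(s * x))) := by
    intro x hx
    have hx0 : (0:ℝ) < x := hx
    have e1 : ((x ^ (r-1) : ℝ) : ℂ) = (x:ℂ) ^ ((r:ℂ)-1) := by
      rw [Complex.ofReal_cpow hx0.le]; push_cast; ring_nf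
    have e2 : ((Real.exp (-(b*x)) : ℝ) : ℂ) * Complex.exp (Complex.I * ω * x)
        = Complex.exp (-(s * x)) := by
      rw [Complex.ofReal_exp, ← Complex.exp_add]
      congr 1
      rw [hs_def]; push_cast; ring
    unfold ProbabilityTheory.gammaPDFReal
    rw [if_pos hx0.le, Complex.ofReal_mul, Complex.ofReal_mul, e1, mul_assoc, mul_assoc, e2]
  rw [setIntegral_congr_fun measurableSet_Ioi hcongr]
  rw [integral_const_mul, laplace_cpow hr hs_re]
  rw [Complex.Gamma_ofReal]
  have hΓ : (Real.Gamma r : ℂ) ≠ 0 := by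
    exact_mod_cast (Real.Gamma_pos_of_pos hr).ne'
  have hlhs : ((b ^ r / Real.Gamma r : ℝ) : ℂ) * ((Real.Gamma r : ℂ) * s ^ (-(r:ℂ)))
      = ((b ^ r : ℝ) : ℂ) * s ^ (-(r:ℂ)) := by
    push_cast
    field_simp
  rw [hlhs]
  have h1 : (1 : ℂ) - Complex.I * ω / b = ((b⁻¹ : ℝ) : ℂ) * s := by
    rw [hs_def]
    push_cast
    have hbne : (b:ℂ) ≠ 0 := by exact_mod_cast hb.ne'
    field_simp
  rw [h1, Complex.log_ofReal_mul (inv_pos.mpr hb) hs_ne, mul_add, Complex.exp_add]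
  congr 1
  · rw [Real.log_inv, Real.rpow_def_of_pos hb, Complex.ofReal_exp]
    congr 1
    push_cast
    ring
  · rw [Complex.cpow_def_of_ne_zero hs_ne]
    congr 1
    ring
end

section
/- (Characteristic function of the variance-gamma law) Let σ > 0, a > 0, b > 0, t > 0 be real numbers, and let μ be the probability measure on ℝ obtained as the Gaussian mixture μ = ∫ N(0, σ²τ) dG(τ), where G is the Gamma distribution with shape ta and rate b and N(0, v) denotes the centered Gaussian measure on ℝ with variance v (this is the law of σW(τ(t)) for the variance-gamma process obtained by composing a standard Brownian motion W with a gamma process τ). Then for every ω ∈ ℝ, the characteristic function of μ satisfies ∫ e^{iωx} dμ(x) = exp(−t a · log(1 + σ²ω²/(2b))); in particular it is real-valued. -/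
open MeasureTheory Complex ProbabilityTheory
open Real NNReal ENNReal

-- measurability of the gaussian kernel
lemma measurable_gaussianKernel {f : ℝ → ℝ≥0} (hf : Measurable f) :
    Measurable (fun τ : ℝ => gaussianReal 0 (f τ)) := by
  apply Measure.measurable_of_measurable_coe
  intro s hs
  have : (fun τ : ℝ => gaussianReal 0 (f τ) s)
      = fun τ => if f τ = 0 then Measure.dirac (0:ℝ) s
          else ∫⁻ x in s, gaussianPDF 0 (f τ) x := by
    funext τ
    by_cases h : f τ = 0
    · simp [gaussianReal, h]
    · rw [gaussianReal_of_var_ne_zero _ h, withDensity_apply _ hs, if_neg h]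
  rw [this]
  have hmeas : Measurable fun τ : ℝ => ∫⁻ x in s, gaussianPDF 0 (f τ) x := by
    simp_rw [← lintegral_indicator hs]
    apply Measurable.lintegral_prod_right' (f := fun p : ℝ × ℝ => s.indicator (gaussianPDF 0 (f p.1)) p.2)
    apply Measurable.indicator _ (measurable_snd hs)
    apply Measurable.ennreal_ofReal
    simp only [gaussianPDFReal_def]
    fun_prop
  exact Measurable.ite (hf (measurableSet_singleton 0)) measurable_const hmeas

lemma charFun_gaussianReal0 (v : ℝ≥0) (ω : ℝ) :
    ∫ x, Complex.exp (Complex.I * ω * x) ∂(gaussianReal 0 v)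
      = (Real.exp (-(v : ℝ) * ω ^ 2 / 2) : ℂ) := by
  by_cases hv : v = 0
  · simp [hv, gaussianReal_zero_var]
  · rw [gaussianReal_of_var_ne_zero _ hv]
    have hpdf : gaussianPDF 0 v = fun x => ((fun y => Real.toNNReal (gaussianPDFReal 0 v y)) x : ℝ≥0∞) := rfl
    rw [hpdf, integral_withDensity_eq_integral_smul
      ((measurable_gaussianPDFReal 0 v).real_toNNReal)]
    have hvpos : (0:ℝ) < (v:ℝ) := by positivity
    set c : ℂ := 1 / (2 * (v:ℝ)) with hc
    have hcre : 0 < c.re := by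
      simp only [hc, one_div]
      rw [← Complex.ofReal_ofNat, ← Complex.ofReal_mul, ← Complex.ofReal_inv, Complex.ofReal_re]
      positivity
    have key : ∀ x : ℝ, (Real.toNNReal (gaussianPDFReal 0 v x)) • Complex.exp (Complex.I * ω * x)
        = ((Real.sqrt (2 * π * v))⁻¹ : ℂ) *
            (Complex.exp (Complex.I * ω * x) * Complex.exp (-c * x ^ 2)) := by
      intro x
      rw [NNReal.smul_def, Real.coe_toNNReal _ (gaussianPDFReal_nonneg 0 v x),
        real_smul, gaussianPDFReal_def]
      push_cast
      rw [mul_assoc]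
      congr 1
      rw [mul_comm]
      congr 1
      rw [hc]
      ring
    simp_rw [key]
    rw [integral_const_mul, fourierIntegral_gaussian hcre (ω:ℂ)]
    have h2pv : (0:ℝ) ≤ 2 * π * v := by positivity
    have hsqrt : Real.sqrt (2 * π * v) ≠ 0 := by
      positivity
    have hπc : (↑π / c : ℂ) = ((2 * π * (v:ℝ) : ℝ) : ℂ) := by
      rw [hc]
      push_cast
      field_simp
    have hhalf : (1/2 : ℂ) = ((1/2 : ℝ) : ℂ) := by norm_num
    have hpow : ((π : ℂ) / c) ^ (1/2 : ℂ) = ((Real.sqrt (2 * π * v) : ℝ) : ℂ) := by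
      rw [hπc, hhalf, ← Complex.ofReal_cpow h2pv, Real.sqrt_eq_rpow]
    have harg : (-(ω:ℂ) ^ 2 / (4 * c)) = ((-(v:ℝ) * ω ^ 2 / 2 : ℝ) : ℂ) := by
      rw [hc]
      push_cast
      field_simp
      ring
    rw [hpow, harg, ← Complex.ofReal_exp, ← mul_assoc, ← Complex.ofReal_inv, ← Complex.ofReal_mul,
      inv_mul_cancel₀ hsqrt]
    simp

lemma gamma_laplace (s b σ ω : ℝ) (hs : 0 < s) (hb : 0 < b) (hσ : 0 < σ) :
    ∫ τ, Real.exp (-((Real.toNNReal (σ ^ 2 * τ) : ℝ≥0) : ℝ) * ω ^ 2 / 2) ∂(gammaMeasure s b)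
      = Real.exp (-s * Real.log (1 + σ ^ 2 * ω ^ 2 / (2 * b))) := by
  set c : ℝ := σ ^ 2 * ω ^ 2 / 2 with hcdef
  have hc : 0 ≤ c := by positivity
  have hbc : 0 < b + c := by positivity
  rw [gammaMeasure]
  have hpdf : gammaPDF s b = fun x => ((fun y => (gammaPDFReal s b y).toNNReal) x : ℝ≥0∞) := rfl
  rw [hpdf, integral_withDensity_eq_integral_smul ((measurable_gammaPDFReal s b).real_toNNReal)]
  have key : ∀ τ : ℝ, (gammaPDFReal s b τ).toNNReal •
        Real.exp (-((Real.toNNReal (σ ^ 2 * τ) : ℝ≥0) : ℝ) * ω ^ 2 / 2)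
      = (b / (b + c)) ^ s * gammaPDFReal s (b + c) τ := by
    intro τ
    rw [NNReal.smul_def, Real.coe_toNNReal _ (gammaPDFReal_nonneg hs hb τ), smul_eq_mul]
    by_cases h : 0 ≤ τ
    · have hmax : ((Real.toNNReal (σ ^ 2 * τ) : ℝ≥0) : ℝ) = σ ^ 2 * τ :=
        Real.coe_toNNReal _ (by positivity)
      rw [hmax]
      simp only [gammaPDFReal, if_pos h]
      have he : Real.exp (-(b * τ)) * Real.exp (-(σ ^ 2 * τ) * ω ^ 2 / 2)
          = Real.exp (-((b + c) * τ)) := by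
        rw [← Real.exp_add]; congr 1; rw [hcdef]; ring
      rw [Real.div_rpow hb.le hbc.le]
      have hne : (b + c) ^ s ≠ 0 := (Real.rpow_pos_of_pos hbc s).ne'
      have hΓ : Real.Gamma s ≠ 0 := (Real.Gamma_pos_of_pos hs).ne'
      field_simp
      rw [mul_assoc, ← Real.exp_add]; congr 2; rw [hcdef]; ring
    · simp only [gammaPDFReal, if_neg h, zero_mul, mul_zero]
  simp_rw [key]
  rw [integral_const_mul]
  have h1 : ∫ τ, gammaPDFReal s (b + c) τ = 1 := by
    rw [integral_eq_lintegral_of_nonneg_ae (ae_of_all _ (gammaPDFReal_nonneg hs hbc))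
      (measurable_gammaPDFReal _ _).aestronglyMeasurable]
    rw [show (fun τ => ENNReal.ofReal (gammaPDFReal s (b + c) τ)) = gammaPDF s (b + c) from rfl,
      lintegral_gammaPDF_eq_one hs hbc]
    simp
  rw [h1, mul_one]
  have hy : 1 + σ ^ 2 * ω ^ 2 / (2 * b) = (b + c) / b := by
    rw [hcdef]; field_simp
  rw [hy, Real.rpow_def_of_pos (by positivity : (0:ℝ) < b / (b + c))]
  congr 1
  rw [Real.log_div hb.ne' hbc.ne', Real.log_div hbc.ne' hb.ne']
  ring


/-- Characteristic function of the variance-gamma law. Let `μ` be the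
Gaussian mixture `μ = ∫ N(0, σ²τ) dG(τ)` where `G` is the Gamma distribution with shape `ta`
and rate `b` (the law of the variance-gamma process `σW(τ(t))`). Then for every `ω`,
`∫ e^{iωx} dμ(x) = exp(-ta log(1 + σ²ω²/(2b)))`; in particular it is real-valued. -/
theorem charFun_varianceGamma (σ a b t : ℝ) (hσ : 0 < σ) (ha : 0 < a) (hb : 0 < b)
    (ht : 0 < t)
    (μ : Measure ℝ)
    (hμ : μ = (gammaMeasure (t * a) b).bind
      (fun τ : ℝ => gaussianReal 0 (Real.toNNReal (σ ^ 2 * τ)))) :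
    ∀ ω : ℝ,
      ∫ x, Complex.exp (Complex.I * ω * x) ∂μ
        = (Real.exp (-(t * a) * Real.log (1 + σ ^ 2 * ω ^ 2 / (2 * b))) : ℂ) := by
  intro ω
  have hfm : Measurable (fun τ : ℝ => Real.toNNReal (σ ^ 2 * τ)) :=
    (measurable_id.const_mul (σ ^ 2)).real_toNNReal
  set K : Kernel ℝ ℝ := ⟨fun τ => gaussianReal 0 (Real.toNNReal (σ ^ 2 * τ)),
    measurable_gaussianKernel hfm⟩ with hKdef
  have hK : ∀ τ, K τ = gaussianReal 0 (Real.toNNReal (σ ^ 2 * τ)) := fun τ => rfl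
  haveI : IsMarkovKernel K :=
    ⟨fun τ => by rw [hK]; infer_instance⟩
  haveI : IsProbabilityMeasure (gammaMeasure (t * a) b) :=
    isProbabilityMeasure_gammaMeasure (by positivity) hb
  have hmeas : Measurable fun x : ℝ => Complex.exp (Complex.I * ω * x) :=
    Complex.measurable_exp.comp ((Complex.measurable_ofReal).const_mul (Complex.I * ω))
  have hbind : μ = ((gammaMeasure (t * a) b) ⊗ₘ K).map Prod.snd := by
    rw [hμ]
    ext s hs
    rw [Measure.map_apply measurable_snd hs, Measure.compProd_apply (measurable_snd hs),
      Measure.bind_apply hs (measurable_gaussianKernel hfm).aemeasurable]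
    rfl
  have hint : Integrable (fun p : ℝ × ℝ => Complex.exp (Complex.I * ω * p.2))
      ((gammaMeasure (t * a) b) ⊗ₘ K) := by
    refine Integrable.mono' (integrable_const 1) (hmeas.comp measurable_snd).aestronglyMeasurable ?_
    filter_upwards with p
    rw [Complex.norm_exp]
    have : (Complex.I * ω * p.2).re = 0 := by simp [Complex.mul_re]
    rw [this, Real.exp_zero]
  rw [hbind, integral_map measurable_snd.aemeasurable hmeas.aestronglyMeasurable,
    Measure.integral_compProd hint]
  simp_rw [hK, charFun_gaussianReal0]
  rw [← gamma_laplace (t * a) b σ ω (by positivity) hb hσ]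
  exact integral_ofReal
end
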